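/- Let N ≥ T ≥ 500 be natural numbers, set a = √(2·log N), b = √(2·log T − 2·log(3·2^{−3/2}·(2·log T)^{3/2})), and β = (b + ei(b)/Φᶜ(b)) / (1/(√(2π)·a²) + a). Then 0 < β and β ≤ 1 − 1/(√(2π)·a³). -/

import Mathlib

set_option maxHeartbeats 1000000

open MeasureTheory

/-- The standard normal density `φ(x) = (2π)^{-1/2} exp(-x²/2)`. -/
noncomputable def stdNormalPDF (x : ℝ) : ℝ :=
  (Real.sqrt (2 * Real.pi))⁻¹ * Real.exp (-x ^ 2 / 2)

/-- The standard normal complementary CDF `Φᶜ(x) = ∫_x^∞ φ(u) du`. -/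
noncomputable def stdNormalCCDF (x : ℝ) : ℝ :=
  ∫ u in Set.Ioi x, stdNormalPDF u

/-- The standard expected improvement `ei(x) = φ(x) - x·Φᶜ(x)`. -/
noncomputable def stdEI (x : ℝ) : ℝ :=
  stdNormalPDF x - x * stdNormalCCDF x

open Filter Set Topology in
lemma stdNormalPDF_pos (x : ℝ) : 0 < stdNormalPDF x := by
  unfold stdNormalPDF
  have : 0 < Real.sqrt (2 * Real.pi) := Real.sqrt_pos.2 (by positivity)
  positivity

open Filter Set Topology in
lemma stdNormalPDF_integrable : Integrable stdNormalPDF := by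
  have h : Integrable (fun x : ℝ => Real.exp (-(2⁻¹ : ℝ) * x ^ 2)) :=
    integrable_exp_neg_mul_sq (by norm_num)
  have h2 := h.const_mul (Real.sqrt (2 * Real.pi))⁻¹
  have : ∀ x : ℝ, -x ^ 2 / 2 = -(2⁻¹ : ℝ) * x ^ 2 := by intro x; ring
  unfold stdNormalPDF
  simp_rw [this]
  exact h2

open Filter Set Topology in
lemma mills (b : ℝ) (hb : 0 < b) :
    stdNormalPDF b * b⁻¹ ≤ (1 + (b ^ 2)⁻¹) * stdNormalCCDF b := by
  have hIntPhi : IntegrableOn stdNormalPDF (Set.Ioi b) := stdNormalPDF_integrable.integrableOn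
  set g : ℝ → ℝ := fun u => (1 + (u ^ 2)⁻¹) * stdNormalPDF u with hgdef
  have hbound : ∀ u ∈ Set.Ioi b, g u ≤ (1 + (b ^ 2)⁻¹) * stdNormalPDF u := by
    intro u hu
    have hub : b ≤ u := le_of_lt hu
    have h2 : (u ^ 2)⁻¹ ≤ (b ^ 2)⁻¹ := by
      apply inv_anti₀ (by positivity)
      nlinarith
    have h3 := (stdNormalPDF_pos u).le
    simp only [hgdef]
    nlinarith
  have hgmeas : Measurable g := by
    unfold g; unfold stdNormalPDF
    measurability
  have hgnn : ∀ u, 0 ≤ g u := by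
    intro u
    have : (0:ℝ) ≤ (u ^ 2)⁻¹ := by positivity
    simp only [hgdef]
    nlinarith [(stdNormalPDF_pos u).le]
  have hIntg : IntegrableOn g (Set.Ioi b) := by
    apply Integrable.mono' (hIntPhi.const_mul (1 + (b ^ 2)⁻¹))
      hgmeas.aestronglyMeasurable.restrict
    filter_upwards [ae_restrict_mem measurableSet_Ioi] with u hu
    rw [Real.norm_eq_abs, abs_of_nonneg (hgnn u)]
    exact hbound u hu
  have hderiv : ∀ u ∈ Set.Ici b, HasDerivAt (fun u => -(stdNormalPDF u * u⁻¹)) (g u) u := by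
    intro u hu
    have hu0 : u ≠ 0 := ne_of_gt (lt_of_lt_of_le hb hu)
    have h1 : HasDerivAt (fun u : ℝ => -u ^ 2 / 2) (-u) u := by
      have h0 := (hasDerivAt_pow 2 u).neg.div_const 2
      exact h0.congr_deriv (by norm_num; ring)
    have h2 := h1.exp
    have h3 : HasDerivAt (fun u : ℝ => u⁻¹) (-(u ^ 2)⁻¹) u := by
      simpa using hasDerivAt_inv hu0
    have h4 := ((h2.mul h3).const_mul ((Real.sqrt (2 * Real.pi))⁻¹)).neg
    have hfe : (fun u => -(stdNormalPDF u * u⁻¹)) =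
        (fun u => -((Real.sqrt (2 * Real.pi))⁻¹ * (Real.exp (-u ^ 2 / 2) * u⁻¹))) := by
      funext v; unfold stdNormalPDF; ring
    rw [hfe]
    refine h4.congr_deriv ?_
    simp only [hgdef]
    unfold stdNormalPDF
    field_simp
    ring
  have htend : Tendsto (fun u => -(stdNormalPDF u * u⁻¹)) atTop (𝓝 0) := by
    have hsq : Tendsto (fun u : ℝ => u ^ 2) atTop atTop := tendsto_pow_atTop two_ne_zero
    have hneg : Tendsto (fun u : ℝ => -u ^ 2 / 2) atTop atBot :=
      (tendsto_neg_atTop_atBot.comp hsq).atBot_div_const (by norm_num)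
    have hexp : Tendsto (fun u : ℝ => Real.exp (-u ^ 2 / 2)) atTop (𝓝 0) :=
      Real.tendsto_exp_atBot.comp hneg
    have hphi : Tendsto stdNormalPDF atTop (𝓝 0) := by
      unfold stdNormalPDF
      simpa using hexp.const_mul ((Real.sqrt (2 * Real.pi))⁻¹)
    simpa using (hphi.mul tendsto_inv_atTop_zero).neg
  have hFTC := integral_Ioi_of_hasDerivAt_of_tendsto' hderiv hIntg htend
  have hcmp : ∫ u in Set.Ioi b, g u ≤ ∫ u in Set.Ioi b, (1 + (b ^ 2)⁻¹) * stdNormalPDF u :=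
    setIntegral_mono_on hIntg (hIntPhi.const_mul _) measurableSet_Ioi hbound
  rw [hFTC, integral_const_mul] at hcmp
  unfold stdNormalCCDF
  linarith

lemma master_ineq (L s c : ℝ) (hL : (12.42:ℝ) ≤ L) (hs : (5/2:ℝ) ≤ s)
    (hLs : 12.18 * (s - 3/2) ≤ L) (hcu : c ≤ 1/8) :
    4 * L ≤ 9 * s ^ 2 * (L - c - 3 * s) := by
  have h1 : (4:ℝ) ≤ 0.64 * s ^ 2 := by nlinarith
  have h2 : 9 * s ^ 2 * (1/8 + 3 * s) ≤ 12.18 * (s - 3/2) * (9 * s ^ 2 - 4) := by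
    nlinarith [mul_nonneg (sub_nonneg.2 hs) (sq_nonneg (s - 5/2)), sq_nonneg (s - 5/2),
      mul_nonneg (sub_nonneg.2 hs) (mul_nonneg (sub_nonneg.2 hs) (sub_nonneg.2 hs))]
  have h3 : 12.18 * (s - 3/2) * (9 * s ^ 2 - 4) ≤ L * (9 * s ^ 2 - 4) := by
    apply mul_le_mul_of_nonneg_right hLs
    nlinarith
  nlinarith

lemma numchain (L s c b x : ℝ) (hL : (12.42:ℝ) ≤ L) (hs : (5/2:ℝ) ≤ s)
    (hcl : (1/9:ℝ) ≤ c) (hM : 4 * L ≤ 9 * s ^ 2 * (L - c - 3 * s))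
    (hb2 : b ^ 2 = L - c - 3 * s) (hbpos : 0 < b)
    (hx2 : x ^ 2 = L) (hxpos : 0 < x) :
    b + 1 / b + 1 / (2 * Real.pi * x ^ 5) ≤ x := by
  have hπ : (3.141592 : ℝ) < Real.pi := Real.pi_gt_d6
  have hspos : (0:ℝ) < s := by linarith
  have hx35 : (3.5 : ℝ) ≤ x := by nlinarith
  have hbx : b ≤ x := by nlinarith
  have h3sb : 2 * x ≤ 3 * s * b := by
    nlinarith [show (0:ℝ) < 2 * x + 3 * s * b by positivity]
  have hA : c + 3 * s ≤ 2 * x * (x - b) := by nlinarith [sq_nonneg (x - b)]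
  have hB : 1 / b ≤ 3 * s / (2 * x) := by
    rw [div_le_div_iff₀ hbpos (by positivity)]
    nlinarith
  have hx4 : (150 : ℝ) ≤ x ^ 4 := by nlinarith [sq_nonneg (x ^ 2 - 12.42)]
  have hC : 1 / (2 * Real.pi * x ^ 5) ≤ c / (2 * x) := by
    rw [div_le_div_iff₀ (by positivity) (by positivity)]
    have h1 : (1/9 : ℝ) * (2 * Real.pi) * (150 * x) ≤ c * (2 * Real.pi) * (x ^ 4 * x) := by
      gcongr
    have h2 : c * (2 * Real.pi) * (x ^ 4 * x) = c * (2 * Real.pi * x ^ 5) := by ring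
    nlinarith [mul_lt_mul_of_pos_right hπ hxpos]
  have hD : 3 * s / (2 * x) + c / (2 * x) ≤ x - b := by
    rw [← add_div, div_le_iff₀ (by positivity)]
    nlinarith
  linarith

/-- The 'choosing β' step in the proof of the paper's main theorem: the chosen
`β = (b − ei(b)/ei'(b)) / (1/(√(2π)a²) + a)` satisfies `0 < β ≤ 1 − 1/(√(2π)a³)`. -/
theorem stmt14 (N T : ℕ) (hT : 500 ≤ T) (hN : T ≤ N)
    (a b β : ℝ) (ha : a = Real.sqrt (2 * Real.log N))
    (hb : b = Real.sqrt (2 * Real.log T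
      - 2 * Real.log (3 * (2 : ℝ) ^ (-(3 : ℝ) / 2) * (2 * Real.log T) ^ ((3 : ℝ) / 2))))
    (hβ : β = (b + stdEI b / stdNormalCCDF b)
      / (1 / (Real.sqrt (2 * Real.pi) * a ^ 2) + a)) :
    0 < β ∧ β ≤ 1 - 1 / (Real.sqrt (2 * Real.pi) * a ^ 3) := by
  have hπ : (3.141592 : ℝ) < Real.pi := Real.pi_gt_d6
  have hl2 : (0.6931471803 : ℝ) < Real.log 2 := Real.log_two_gt_d9
  have hT' : (500 : ℝ) ≤ (T : ℝ) := by exact_mod_cast hT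
  have hTN : (T : ℝ) ≤ (N : ℝ) := by exact_mod_cast hN
  -- log 500 ≥ 6.214
  have h500 : (6.214 : ℝ) ≤ Real.log 500 := by
    have h512 : Real.log 512 = 9 * Real.log 2 := by
      rw [show (512 : ℝ) = 2 ^ 9 by norm_num, Real.log_pow]; norm_num
    have hsplit : Real.log 500 = Real.log 512 + Real.log (125 / 128) := by
      rw [← Real.log_mul (by norm_num) (by norm_num)]; norm_num
    have hlow : Real.log (128 / 125) ≤ 128 / 125 - 1 :=
      Real.log_le_sub_one_of_pos (by norm_num)
    have hneg : Real.log (125 / 128) = -Real.log (128 / 125) := by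
      rw [← Real.log_inv]; norm_num
    rw [hsplit, h512, hneg]
    nlinarith
  -- L and its bounds
  set L : ℝ := 2 * Real.log T with hLdef
  have hlogT : Real.log 500 ≤ Real.log T := Real.log_le_log (by norm_num) hT'
  have hL : (12.42 : ℝ) ≤ L := by simp only [hLdef]; nlinarith
  have hLpos : 0 < L := by linarith
  set s : ℝ := Real.log L with hsdef
  -- exp bounds
  have hexp5u : Real.exp 5 ≤ 154.2564 := by
    have h1 : Real.exp 1 ^ (5 : ℕ) = Real.exp 5 := by
      rw [← Real.exp_nat_mul]; norm_num
    have h2 : Real.exp 1 ^ (5 : ℕ) ≤ 2.7182818286 ^ (5 : ℕ) :=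
      pow_le_pow_left₀ (Real.exp_pos 1).le Real.exp_one_lt_d9.le 5
    rw [h1] at h2
    nlinarith
  have hexp5l : (148.3524 : ℝ) ≤ Real.exp 5 := by
    have h1 : Real.exp 1 ^ (5 : ℕ) = Real.exp 5 := by
      rw [← Real.exp_nat_mul]; norm_num
    have h2 : (2.7182818283 : ℝ) ^ (5 : ℕ) ≤ Real.exp 1 ^ (5 : ℕ) :=
      pow_le_pow_left₀ (by norm_num) Real.exp_one_gt_d9.le 5
    rw [h1] at h2
    nlinarith
  have hsq52 : Real.exp (5 / 2) * Real.exp (5 / 2) = Real.exp 5 := by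
    rw [← Real.exp_add]; norm_num
  have hexp52u : Real.exp (5 / 2) ≤ 12.42 := by nlinarith [Real.exp_pos (5 / 2)]
  have hexp52l : (12.18 : ℝ) ≤ Real.exp (5 / 2) := by nlinarith [Real.exp_pos (5 / 2)]
  have hs : (5 / 2 : ℝ) ≤ s := by
    have h1 : Real.exp (5 / 2) ≤ L := by linarith
    have h := Real.log_le_log (Real.exp_pos _) h1
    rwa [Real.log_exp] at h
  have hLs : 12.18 * (s - 3 / 2) ≤ L := by
    have hLexp : L = Real.exp s := (Real.exp_log hLpos).symm
    have h1 : Real.exp s = Real.exp (5 / 2) * Real.exp (s - 5 / 2) := by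
      rw [← Real.exp_add]; ring_nf
    have h2 : 1 + (s - 5 / 2) ≤ Real.exp (s - 5 / 2) := by
      linarith [Real.add_one_le_exp (s - 5 / 2)]
    nlinarith [Real.exp_pos (s - 5 / 2)]
  -- c = log(9/8)
  set c : ℝ := Real.log (9 / 8) with hcdef
  have hcu : c ≤ 1 / 8 := by
    have h := Real.log_le_sub_one_of_pos (show (0:ℝ) < 9/8 by norm_num)
    rw [hcdef]; linarith
  have hcl : (1 / 9 : ℝ) ≤ c := by
    have h1 : Real.log (8 / 9) ≤ 8 / 9 - 1 := Real.log_le_sub_one_of_pos (by norm_num)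
    have h2 : Real.log (8 / 9) = -c := by
      rw [hcdef, ← Real.log_inv]; norm_num
    rw [h2] at h1
    linarith
  -- the inner expression
  have hinner : 2 * Real.log T
      - 2 * Real.log (3 * (2 : ℝ) ^ (-(3 : ℝ) / 2) * (2 * Real.log T) ^ ((3 : ℝ) / 2))
      = L - c - 3 * s := by
    have h2pos : (0 : ℝ) < (2 : ℝ) ^ (-(3 : ℝ) / 2) := Real.rpow_pos_of_pos (by norm_num) _
    have hrp : (0 : ℝ) < (2 * Real.log T) ^ ((3 : ℝ) / 2) := Real.rpow_pos_of_pos hLpos _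
    rw [Real.log_mul (by positivity) (ne_of_gt hrp),
      Real.log_mul (by norm_num) (ne_of_gt h2pos),
      Real.log_rpow (by norm_num : (0:ℝ) < 2), Real.log_rpow hLpos]
    have h98 : c = 2 * Real.log 3 - 3 * Real.log 2 := by
      rw [hcdef, show (9 : ℝ) / 8 = 3 ^ 2 / 2 ^ 3 by norm_num,
        Real.log_div (by norm_num) (by norm_num), Real.log_pow, Real.log_pow]
      push_cast; ring
    rw [h98, hsdef, hLdef]; ring
  -- master inequality
  have hM : 4 * L ≤ 9 * s ^ 2 * (L - c - 3 * s) := master_ineq L s c hL hs hLs hcu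
  have hIpos : 0 < L - c - 3 * s := by nlinarith [sq_nonneg s]
  -- b facts
  have hbv : b = Real.sqrt (L - c - 3 * s) := by rw [hb, hinner]
  have hb2 : b ^ 2 = L - c - 3 * s := by
    rw [hbv]; exact Real.sq_sqrt hIpos.le
  have hbpos : 0 < b := by rw [hbv]; exact Real.sqrt_pos.2 hIpos
  -- x = sqrt L
  set x : ℝ := Real.sqrt L with hxdef
  have hx2 : x ^ 2 = L := Real.sq_sqrt hLpos.le
  have hxpos : 0 < x := Real.sqrt_pos.2 hLpos
  have goal1 : b + 1 / b + 1 / (2 * Real.pi * x ^ 5) ≤ x :=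
    numchain L s c b x hL hs hcl hM hb2 hbpos hx2 hxpos
  -- a facts
  have hloga : L ≤ 2 * Real.log N := by
    have h1 : Real.log T ≤ Real.log N :=
      Real.log_le_log (by linarith) hTN
    simp only [hLdef]
    linarith
  have hax : x ≤ a := by
    rw [ha, hxdef]; exact Real.sqrt_le_sqrt hloga
  have hapos : 0 < a := lt_of_lt_of_le hxpos hax
  have goal2 : x - 1 / (2 * Real.pi * x ^ 5) ≤ a - 1 / (2 * Real.pi * a ^ 5) := by
    have h1 : 2 * Real.pi * x ^ 5 ≤ 2 * Real.pi * a ^ 5 := by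
      have h0 := pow_le_pow_left₀ hxpos.le hax 5
      nlinarith
    have h2 : 1 / (2 * Real.pi * a ^ 5) ≤ 1 / (2 * Real.pi * x ^ 5) :=
      one_div_le_one_div_of_le (by positivity) h1
    linarith
  -- Gaussian bounds
  have hmills := mills b hbpos
  have hccdfpos : 0 < stdNormalCCDF b := by
    have h1 : 0 < stdNormalPDF b * b⁻¹ := by
      have := stdNormalPDF_pos b
      positivity
    have h2 : (0 : ℝ) < 1 + (b ^ 2)⁻¹ := by positivity
    nlinarith
  have hphile : stdNormalPDF b ≤ (b + 1 / b) * stdNormalCCDF b := by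
    have h := mul_le_mul_of_nonneg_right hmills hbpos.le
    have e1 : stdNormalPDF b * b⁻¹ * b = stdNormalPDF b := by field_simp
    have e2 : (1 + (b ^ 2)⁻¹) * stdNormalCCDF b * b = (b + 1 / b) * stdNormalCCDF b := by
      field_simp
    rw [e1, e2] at h
    exact h
  have hratio : stdNormalPDF b / stdNormalCCDF b ≤ b + 1 / b :=
    (div_le_iff₀ hccdfpos).2 hphile
  -- numerator rewrite
  have hnum : b + stdEI b / stdNormalCCDF b = stdNormalPDF b / stdNormalCCDF b := by
    unfold stdEI
    field_simp
    ring
  -- denominator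
  set S : ℝ := Real.sqrt (2 * Real.pi) with hSdef
  have hSpos : 0 < S := Real.sqrt_pos.2 (by positivity)
  have hS2 : S ^ 2 = 2 * Real.pi := Real.sq_sqrt (by positivity)
  have hDpos : 0 < 1 / (S * a ^ 2) + a := by positivity
  -- key identity
  have hid : (1 - 1 / (S * a ^ 3)) * (1 / (S * a ^ 2) + a) = a - 1 / (2 * Real.pi * a ^ 5) := by
    rw [← hS2]
    field_simp
    ring
  constructor
  · rw [hβ, hnum]
    have := stdNormalPDF_pos b
    positivity
  · rw [hβ, hnum, div_le_iff₀ hDpos, hid]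
    calc stdNormalPDF b / stdNormalCCDF b ≤ b + 1 / b := hratio
      _ ≤ a - 1 / (2 * Real.pi * a ^ 5) := by linarith
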